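/- Let n ≥ 1 and let y ∈ ℝⁿ with |y| = 1. Then ∫₀¹ (t·x − y)/|t·x − y| dt → −y as x → y with x ranging over the closed unit ball. Consequently, for k = 1 Brendle's vector field satisfies Y(x) + (x−y)/|x−y| = x/2 + (1/2)·∫₀¹ (t·x − y)/|t·x − y| dt → 0 as x → y within the closed unit ball. -/

import Mathlib

open Metric Set Filter MeasureTheory

/-- Brendle's vector field `Y(x) = x/2 − (x−y)/|x−y|^k − ((k−2)/2)·∫₀¹ (t·x − y)/|t·x − y|^k dt`. -/
noncomputable def brendleY (n k : ℕ) (y : EuclideanSpace ℝ (Fin n)) :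
    EuclideanSpace ℝ (Fin n) → EuclideanSpace ℝ (Fin n) := fun x =>
  (2 : ℝ)⁻¹ • x - (‖x - y‖ ^ k)⁻¹ • (x - y) -
    (((k : ℝ) - 2) / 2) • ∫ t in (0 : ℝ)..1, (‖t • x - y‖ ^ k)⁻¹ • (t • x - y)

theorem brendleY_aux (n : ℕ) (y : EuclideanSpace ℝ (Fin n)) (hy : ‖y‖ = 1) :
    Tendsto (fun x : EuclideanSpace ℝ (Fin n) =>
        ∫ t in (0 : ℝ)..1, (‖t • x - y‖)⁻¹ • (t • x - y))
      (nhdsWithin y (closedBall (0 : EuclideanSpace ℝ (Fin n)) 1 \ {y}))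
      (nhds (-y)) := by

  have h01 : (0:ℝ) ≤ 1 := zero_le_one
  simp only [intervalIntegral.integral_of_le h01]
  have hconst : (∫ t in Set.Ioc (0:ℝ) 1, (-y) ∂volume) = -y := by
    simp [Real.volume_Ioc]
  rw [← hconst]
  apply tendsto_integral_filter_of_dominated_convergence (fun _ : ℝ => (1:ℝ))
  · filter_upwards with x
    apply Measurable.aestronglyMeasurable
    have hg : Measurable fun t : ℝ => t • x - y :=
      ((continuous_id.smul continuous_const).sub continuous_const).measurable
    exact (hg.norm.inv).smul hg
  · filter_upwards with x
    filter_upwards with t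
    rcases eq_or_ne (t • x - y) 0 with h | h
    · simp [h]
    · rw [norm_smul, norm_inv, norm_norm, inv_mul_cancel₀ (norm_ne_zero_iff.2 h)]
  · exact integrable_const 1
  · have h1 : ∀ᵐ t : ℝ ∂(volume.restrict (Set.Ioc (0:ℝ) 1)), t ≠ 1 := by
      refine ae_restrict_of_ae ?_
      rw [ae_iff]
      simpa using Real.volume_singleton (a := (1:ℝ))
    filter_upwards [h1, ae_restrict_mem measurableSet_Ioc] with t ht1 htIoc
    have ht1' : t < 1 := lt_of_le_of_ne htIoc.2 ht1
    have hv : ((t - 1) • y : EuclideanSpace ℝ (Fin n)) ≠ 0 := by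
      refine smul_ne_zero (sub_ne_zero.2 ht1) ?_
      intro h; rw [h, norm_zero] at hy; norm_num at hy
    have hcont : ContinuousAt (fun v : EuclideanSpace ℝ (Fin n) => (‖v‖)⁻¹ • v) ((t - 1) • y) :=
      ((continuousAt_id.norm).inv₀ (norm_ne_zero_iff.2 hv)).smul continuousAt_id
    have htend : Tendsto (fun x : EuclideanSpace ℝ (Fin n) => t • x - y)
        (nhdsWithin y (closedBall (0 : EuclideanSpace ℝ (Fin n)) 1 \ {y})) (nhds ((t - 1) • y)) := by
      have : Tendsto (fun x : EuclideanSpace ℝ (Fin n) => t • x - y) (nhds y) (nhds (t • y - y)) :=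
        ((by fun_prop : Continuous fun x : EuclideanSpace ℝ (Fin n) => t • x - y).tendsto y)
      rw [show t • y - y = (t - 1) • y by rw [sub_smul, one_smul]] at this
      exact this.mono_left nhdsWithin_le_nhds
    have := hcont.tendsto.comp htend
    convert this using 2
    · rfl
    · rfl
    rw [norm_smul, hy, mul_one, Real.norm_eq_abs, abs_of_nonpos (by linarith),
      smul_smul]
    rw [show (-(t-1))⁻¹ * (t-1) = -1 by
      rw [← neg_inv, neg_mul, inv_mul_cancel₀ (sub_ne_zero.2 ht1)]]
    simp

/-- The case `k = 1`: `∫₀¹ (t·x − y)/|t·x − y| dt → −y` as `x → y` in the closed unit ball,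
`Y(x) + (x−y)/|x−y| = x/2 + (1/2)·∫₀¹ (t·x − y)/|t·x − y| dt`, and consequently
`Y(x) + (x−y)/|x−y| → 0` as `x → y` in the closed unit ball. -/
theorem brendleY_k_one_limit (n : ℕ) (hn : 1 ≤ n)
    (y : EuclideanSpace ℝ (Fin n)) (hy : ‖y‖ = 1) :
    Tendsto (fun x : EuclideanSpace ℝ (Fin n) =>
        ∫ t in (0 : ℝ)..1, (‖t • x - y‖)⁻¹ • (t • x - y))
      (nhdsWithin y (closedBall (0 : EuclideanSpace ℝ (Fin n)) 1 \ {y}))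
      (nhds (-y)) ∧
    (∀ x ∈ closedBall (0 : EuclideanSpace ℝ (Fin n)) 1, x ≠ y →
        brendleY n 1 y x + (‖x - y‖ ^ 1)⁻¹ • (x - y) =
          (2 : ℝ)⁻¹ • x +
            (2 : ℝ)⁻¹ • ∫ t in (0 : ℝ)..1, (‖t • x - y‖)⁻¹ • (t • x - y)) ∧
    Tendsto (fun x : EuclideanSpace ℝ (Fin n) =>
        brendleY n 1 y x + (‖x - y‖ ^ 1)⁻¹ • (x - y))
      (nhdsWithin y (closedBall (0 : EuclideanSpace ℝ (Fin n)) 1 \ {y}))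
      (nhds 0) := by
  have key := brendleY_aux n y hy
  have heq : ∀ x ∈ closedBall (0 : EuclideanSpace ℝ (Fin n)) 1, x ≠ y →
      brendleY n 1 y x + (‖x - y‖ ^ 1)⁻¹ • (x - y) =
        (2 : ℝ)⁻¹ • x +
          (2 : ℝ)⁻¹ • ∫ t in (0 : ℝ)..1, (‖t • x - y‖)⁻¹ • (t • x - y) := by
    intro x _ _
    simp only [brendleY, pow_one, Nat.cast_one]
    rw [show ((1:ℝ) - 2) / 2 = -(2:ℝ)⁻¹ by norm_num]
    module
  refine ⟨key, heq, ?_⟩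
  have h2 : Tendsto (fun x : EuclideanSpace ℝ (Fin n) =>
      (2 : ℝ)⁻¹ • x +
        (2 : ℝ)⁻¹ • ∫ t in (0 : ℝ)..1, (‖t • x - y‖)⁻¹ • (t • x - y))
      (nhdsWithin y (closedBall (0 : EuclideanSpace ℝ (Fin n)) 1 \ {y})) (nhds 0) := by
    have ha : Tendsto (fun x : EuclideanSpace ℝ (Fin n) => (2:ℝ)⁻¹ • x)
        (nhdsWithin y (closedBall (0 : EuclideanSpace ℝ (Fin n)) 1 \ {y}))
        (nhds ((2:ℝ)⁻¹ • y)) :=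
      ((continuous_const_smul _).tendsto y).mono_left nhdsWithin_le_nhds
    have := ha.add (key.const_smul ((2:ℝ)⁻¹))
    rw [show (2:ℝ)⁻¹ • y + (2:ℝ)⁻¹ • (-y) = 0 by module] at this
    exact this
  refine h2.congr' ?_
  filter_upwards [self_mem_nhdsWithin] with x hx
  exact (heq x hx.1 (by simpa using hx.2)).symm
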